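/- Let W(E) and φ : W(E) → (ZMod 2)^n be as in the context, and assume additionally that E i j holds for all distinct i, j ∈ {1,…,n}. Then the kernel of φ is an abelian group if and only if one of the following two conditions holds: (i) E i j holds for all distinct i, j ∈ {1,…,d}; or (ii) every non-adjacent pair {i,j} (i.e. i ≠ j with ¬E i j) contains exactly one element of {1,…,n}, every vertex j ∈ {1,…,d} is non-adjacent to at most one other vertex, and for every non-adjacent pair {i,j} with i ≤ n < j one has a_{j,i} = 1 and a_{k,i} = 0 for every k with n < k ≤ d and k ≠ j. -/

import Mathlib

/-- Relators of the right-angled Coxeter group of the graph `E`: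
`s j ^ 2` for every vertex `j`, and `(s i * s j) ^ 2` for every edge `{i, j}` of `E`. -/
def racgRels {d : ℕ} (E : Fin d → Fin d → Prop) : Set (FreeGroup (Fin d)) :=
  {r | (∃ j : Fin d, r = FreeGroup.of j ^ 2) ∨
    ∃ i j : Fin d, E i j ∧ r = (FreeGroup.of i * FreeGroup.of j) ^ 2}

/-- The right-angled Coxeter group `W(E)` of the graph `E`. -/
abbrev RACG {d : ℕ} (E : Fin d → Fin d → Prop) : Type := PresentedGroup (racgRels E)

/-- The standard generator `s j` of the right-angled Coxeter group `W(E)`. -/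
def racgGen {d : ℕ} (E : Fin d → Fin d → Prop) (j : Fin d) : RACG E :=
  PresentedGroup.of j

section General
variable {d : ℕ} {E : Fin d → Fin d → Prop}

lemma racg_rel_eq_one {r : FreeGroup (Fin d)} (hr : r ∈ racgRels E) :
    (QuotientGroup.mk r : RACG E) = 1 := by
  rw [QuotientGroup.eq_one_iff]
  exact Subgroup.subset_normalClosure hr

lemma racg_gen_sq (j : Fin d) : (racgGen E j) ^ 2 = 1 := by
  have := racg_rel_eq_one (E := E) (Or.inl ⟨j, rfl⟩)
  simp only [racgGen, PresentedGroup.of]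
  rw [← map_pow]
  exact this

lemma racg_edge_sq {i j : Fin d} (h : E i j) :
    (racgGen E i * racgGen E j) ^ 2 = 1 := by
  have := racg_rel_eq_one (E := E) (Or.inr ⟨i, j, h, rfl⟩)
  simp only [racgGen, PresentedGroup.of]
  rw [← map_mul, ← map_pow]
  exact this

lemma racg_gen_inv (j : Fin d) : (racgGen E j)⁻¹ = racgGen E j := by
  have h := racg_gen_sq (E := E) j
  rw [pow_two] at h
  exact inv_eq_of_mul_eq_one_right h

lemma racg_comm {i j : Fin d} (h : E i j) :
    Commute (racgGen E i) (racgGen E j) := by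
  have h2 := racg_edge_sq h
  rw [pow_two] at h2
  have : racgGen E i * racgGen E j = (racgGen E i * racgGen E j)⁻¹ :=
    (inv_eq_of_mul_eq_one_right h2).symm
  rw [mul_inv_rev, racg_gen_inv, racg_gen_inv] at this
  exact this

lemma racg_mem_closure (x : RACG E) :
    x ∈ Subgroup.closure (Set.range (racgGen E)) := by
  refine PresentedGroup.induction_on x (fun z => ?_)
  refine FreeGroup.induction_on z ?_ ?_ ?_ ?_
  · simpa using Subgroup.one_mem _
  · intro t
    exact Subgroup.subset_closure ⟨t, rfl⟩
  · intro t ht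
    rw [map_inv]
    exact Subgroup.inv_mem _ ht
  · intro x y hx hy
    rw [map_mul]
    exact Subgroup.mul_mem _ hx hy

lemma racg_closure_eq_top :
    Subgroup.closure (Set.range (racgGen E)) = (⊤ : Subgroup (RACG E)) :=
  Subgroup.eq_top_iff' _ |>.2 racg_mem_closure

/-- Universal property helper. -/
lemma racg_lift_rels {G : Type*} [Group G] (f : Fin d → G)
    (h1 : ∀ j, f j ^ 2 = 1) (h2 : ∀ i j, E i j → (f i * f j) ^ 2 = 1) :
    ∀ r ∈ racgRels E, (FreeGroup.lift f) r = 1 := by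
  rintro r (⟨j, rfl⟩ | ⟨i, j, hij, rfl⟩)
  · simpa [map_pow] using h1 j
  · simpa [map_pow, map_mul] using h2 i j hij

lemma closure_comm {G : Type*} [Group G] {S : Set G}
    (h : ∀ x ∈ S, ∀ y ∈ S, Commute x y) :
    ∀ x ∈ Subgroup.closure S, ∀ y ∈ Subgroup.closure S, Commute x y := by
  intro x hx y hy
  refine Subgroup.closure_induction₂ (p := fun x y _ _ => Commute x y)
    (fun x y hx hy => h x hx y hy)
    (fun x _ => Commute.one_left x)
    (fun x _ => Commute.one_right x)
    (fun x y z _ _ _ h1 h2 => h1.mul_left h2)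
    (fun y z x _ _ _ h1 h2 => h1.mul_right h2)
    (fun x y _ _ h1 => h1.inv_left)
    (fun x y _ _ h1 => h1.inv_right) hx hy

end General


section Low
variable {d n : ℕ} (E : Fin d → Fin d → Prop) (hnd : n ≤ d)

def lowGen (m : Fin n) : RACG E := racgGen E (Fin.castLE hnd m)

variable (hEn : ∀ i j : Fin d, i.val < n → j.val < n → i ≠ j → E i j)

include hEn in
lemma lowGen_comm (m m' : Fin n) :
    Commute (lowGen E hnd m) (lowGen E hnd m') := by
  rcases eq_or_ne m m' with rfl | h
  · exact Commute.refl _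
  · exact racg_comm (hEn _ _ (by simp) (by simp)
      (fun he => h (Fin.castLE_injective hnd he)))

lemma lowGen_sq (m : Fin n) : (lowGen E hnd m) ^ 2 = 1 := racg_gen_sq _

def lowProd (T : Finset (Fin n)) : RACG E :=
  T.noncommProd (lowGen E hnd)
    (Set.pairwise_of_forall _ _ (fun x y => lowGen_comm E hnd hEn x y))

lemma lowProd_empty : lowProd E hnd hEn (∅ : Finset (Fin n)) = 1 :=
  Finset.noncommProd_empty _ _

lemma lowProd_insert {a : Fin n} {T : Finset (Fin n)} (h : a ∉ T) :
    lowProd E hnd hEn (insert a T) = lowGen E hnd a * lowProd E hnd hEn T :=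
  Finset.noncommProd_insert_of_notMem _ _ _ _ h

lemma lowGen_comm_lowProd (a : Fin n) (T : Finset (Fin n)) :
    Commute (lowGen E hnd a) (lowProd E hnd hEn T) :=
  Finset.noncommProd_commute _ _ _ _ (fun m _ => lowGen_comm E hnd hEn a m)

lemma lowProd_mul_lowGen (T : Finset (Fin n)) (a : Fin n) :
    lowProd E hnd hEn T * lowGen E hnd a = lowProd E hnd hEn (symmDiff T {a}) := by
  by_cases h : a ∈ T
  · have hT : T = insert a (T.erase a) := by
      rw [Finset.insert_erase h]
    have hsd : symmDiff T {a} = T.erase a := by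
      ext x
      simp only [Finset.mem_symmDiff, Finset.mem_singleton, Finset.mem_erase]
      constructor
      · rintro (⟨h1, h2⟩ | ⟨rfl, h2⟩)
        · exact ⟨h2, h1⟩
        · exact absurd h h2
      · rintro ⟨h1, h2⟩; exact Or.inl ⟨h2, h1⟩
    rw [hsd]
    conv_lhs => rw [hT, lowProd_insert E hnd hEn (Finset.notMem_erase a T)]
    rw [(lowGen_comm_lowProd E hnd hEn a (T.erase a)).eq, mul_assoc, ← pow_two,
      lowGen_sq, mul_one]
  · have hsd : symmDiff T {a} = insert a T := by
      ext x
      rcases eq_or_ne x a with rfl | hx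
      · simp [Finset.mem_symmDiff, h]
      · simp [Finset.mem_symmDiff, hx]
    rw [hsd, lowProd_insert E hnd hEn h,
      ← (lowGen_comm_lowProd E hnd hEn a T).eq]

lemma lowProd_mul (T T' : Finset (Fin n)) :
    lowProd E hnd hEn T * lowProd E hnd hEn T'
      = lowProd E hnd hEn (symmDiff T T') := by
  induction T' using Finset.induction_on generalizing T with
  | empty =>
    rw [show symmDiff T (∅ : Finset (Fin n)) = T by
      simpa using symmDiff_bot T]
    simp [lowProd_empty]
  | @insert a T'' ha ih =>
    have hsd : symmDiff T (insert a T'') = symmDiff (symmDiff T {a}) T'' := by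
      rw [symmDiff_assoc]
      congr 1
      ext x
      rcases eq_or_ne x a with rfl | hx
      · simp [Finset.mem_symmDiff, ha]
      · simp [Finset.mem_symmDiff, hx]
    rw [lowProd_insert E hnd hEn ha, ← mul_assoc,
      lowProd_mul_lowGen E hnd hEn T a, ih, hsd]

lemma lowProd_inv (T : Finset (Fin n)) :
    (lowProd E hnd hEn T)⁻¹ = lowProd E hnd hEn T := by
  refine inv_eq_of_mul_eq_one_right ?_
  rw [lowProd_mul, symmDiff_self]
  exact lowProd_empty E hnd hEn

end Low


lemma zmod2_cases (x : ZMod 2) : x = 0 ∨ x = 1 := by revert x; decide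

section Phi
variable {d n : ℕ} (E : Fin d → Fin d → Prop) (hnd : n ≤ d)
  (hEn : ∀ i j : Fin d, i.val < n → j.val < n → i ≠ j → E i j)
  (a : Fin d → Fin n → ZMod 2)
  (ha : ∀ (i : Fin d) (h : i.val < n), a i = Pi.single (⟨i.val, h⟩ : Fin n) 1)
  (φ : RACG E →* Multiplicative (Fin n → ZMod 2))
  (hφ : ∀ j : Fin d, φ (racgGen E j) = Multiplicative.ofAdd (a j))

include ha hφ in
lemma phi_lowGen (m : Fin n) :
    φ (lowGen E hnd m) = Multiplicative.ofAdd (Pi.single m (1 : ZMod 2)) := by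
  rw [lowGen, hφ, ha _ (by simp)]
  congr 1

include ha hφ in
lemma phi_lowProd (T : Finset (Fin n)) :
    φ (lowProd E hnd hEn T)
      = Multiplicative.ofAdd (∑ m ∈ T, Pi.single m (1 : ZMod 2)) := by
  rw [lowProd, Finset.map_noncommProd]
  have h1 : ∀ m ∈ T, φ (lowGen E hnd m)
      = Multiplicative.ofAdd (Pi.single m (1 : ZMod 2)) :=
    fun m _ => phi_lowGen E hnd a ha φ hφ m
  refine (Finset.noncommProd_congr rfl h1 _).trans ((Finset.noncommProd_eq_prod _ _).trans ?_)
  rw [← ofAdd_sum]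

include ha hφ in
lemma toAdd_phi_lowProd (T : Finset (Fin n)) (m : Fin n) :
    Multiplicative.toAdd (φ (lowProd E hnd hEn T)) m
      = if m ∈ T then (1 : ZMod 2) else 0 := by
  rw [phi_lowProd E hnd hEn a ha φ hφ T]
  simp [Finset.sum_pi_single]

/-- The correction set of a vector. -/
def corrSet (v : Fin n → ZMod 2) : Finset (Fin n) :=
  Finset.univ.filter (fun m => v m = 1)

include ha hφ in
lemma phi_corr (v : Fin n → ZMod 2) :
    φ (lowProd E hnd hEn (corrSet v)) = Multiplicative.ofAdd v := by
  rw [phi_lowProd E hnd hEn a ha φ hφ]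
  congr 1
  funext t
  rcases zmod2_cases (v t) with h | h <;>
    simp [Finset.sum_apply, Finset.sum_pi_single, corrSet, h]

end Phi


section Suff
variable {d n : ℕ} {E : Fin d → Fin d → Prop}

lemma racg_ker_abelian (hnd : n ≤ d)
    (hsymm : ∀ i j, E i j → E j i)
    (hEn : ∀ i j : Fin d, i.val < n → j.val < n → i ≠ j → E i j)
    (a : Fin d → Fin n → ZMod 2)
    (ha : ∀ (i : Fin d) (h : i.val < n), a i = Pi.single (⟨i.val, h⟩ : Fin n) 1)
    (φ : RACG E →* Multiplicative (Fin n → ZMod 2))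
    (hφ : ∀ j : Fin d, φ (racgGen E j) = Multiplicative.ofAdd (a j))
    (C1 : ∀ i j : Fin d, i ≠ j → ¬ E i j → (i.val < n ↔ ¬ j.val < n))
    (C2 : ∀ j i k : Fin d, i ≠ j → k ≠ j → ¬ E i j → ¬ E k j → i = k)
    (C3 : ∀ (i j : Fin d) (hi : i.val < n), n ≤ j.val → ¬ E i j →
      a j ⟨i.val, hi⟩ = 1 ∧ ∀ k : Fin d, n ≤ k.val → k ≠ j → a k ⟨i.val, hi⟩ = 0)
    (x y : RACG E) (hx : x ∈ φ.ker) (hy : y ∈ φ.ker) : x * y = y * x := by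
  classical
  have gsq : ∀ t : Fin d, racgGen E t * racgGen E t = 1 := by
    intro t; rw [← pow_two]; exact racg_gen_sq t
  have ginv : ∀ t : Fin d, (racgGen E t)⁻¹ = racgGen E t := fun t => racg_gen_inv t
  have hE' : ∀ p q r : Fin d, p ≠ q → ¬ E p q → r ≠ p → r ≠ q → E r p := by
    intro p q r hpq hnpq hrp hrq
    by_contra hc
    exact hrq (C2 p q r (Ne.symm hpq) hrp (fun h => hnpq (hsymm _ _ h)) hc).symm
  set S : Set (RACG E) :=
    {x | (∃ u : Fin d, (∀ v, v ≠ u → E u v) ∧ x = racgGen E u) ∨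
      (∃ i j : Fin d, i ≠ j ∧ ¬ E i j ∧ x = racgGen E i * racgGen E j)} with hSdef
  set H : Subgroup (RACG E) := Subgroup.closure S with hHdef
  -- Step 1 : elements of S pairwise commute
  have hScomm : ∀ x ∈ S, ∀ y ∈ S, Commute x y := by
    rintro x (⟨u, hu, rfl⟩ | ⟨i, j, hij, hnij, rfl⟩) y
      (⟨u', hu', rfl⟩ | ⟨i', j', hij', hnij', rfl⟩)
    · rcases eq_or_ne u u' with rfl | h
      · exact Commute.refl _
      · exact racg_comm (hu u' (Ne.symm h))
    · have hui : u ≠ i' := by rintro rfl; exact hnij' (hu j' (Ne.symm hij'))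
      have huj : u ≠ j' := by
        rintro rfl; exact hnij' (hsymm _ _ (hu i' hij'))
      exact (racg_comm (hu i' (Ne.symm hui))).mul_right
        (racg_comm (hu j' (Ne.symm huj)))
    · have hui : u' ≠ i := by rintro rfl; exact hnij (hu' j (Ne.symm hij))
      have huj : u' ≠ j := by
        rintro rfl; exact hnij (hsymm _ _ (hu' i hij))
      exact ((racg_comm (hu' i (Ne.symm hui))).mul_right
        (racg_comm (hu' j (Ne.symm huj)))).symm
    · by_cases h1 : i' = i
      · subst h1
        have hjj : j = j' := C2 i' j j' (Ne.symm hij) (Ne.symm hij')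
          (fun h => hnij (hsymm _ _ h)) (fun h => hnij' (hsymm _ _ h))
        subst hjj
        exact Commute.refl _
      · by_cases h2 : i' = j
        · subst h2
          by_cases h3 : j' = i
          · subst h3
            have e1 : (racgGen E j' * racgGen E i') * (racgGen E i' * racgGen E j') = 1 := by
              rw [mul_assoc, ← mul_assoc (racgGen E i'), gsq, one_mul, gsq]
            have e2 : (racgGen E i' * racgGen E j') * (racgGen E j' * racgGen E i') = 1 := by
              rw [mul_assoc, ← mul_assoc (racgGen E j'), gsq, one_mul, gsq]
            unfold Commute SemiconjBy
            rw [e1, e2]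
          · exact absurd (C2 i' i j' hij (Ne.symm hij') hnij
              (fun h => hnij' (hsymm _ _ h))).symm h3
        · by_cases h4 : j' = i
          · subst h4
            exact absurd (C2 j' j i' (Ne.symm hij) hij'
              (fun h => hnij (hsymm _ _ h)) hnij') (fun h => h2 h.symm)
          · by_cases h5 : j' = j
            · subst h5
              exact absurd (C2 j' i i' hij hij' hnij hnij').symm h1
            · have c1 : Commute (racgGen E i) (racgGen E i') :=
                (racg_comm (hE' i j i' hij hnij h1 h2)).symm
              have c2 : Commute (racgGen E i) (racgGen E j') :=
                (racg_comm (hE' i j j' hij hnij h4 h5)).symm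
              have c3 : Commute (racgGen E j) (racgGen E i') :=
                (racg_comm (hE' j i i' (Ne.symm hij)
                  (fun h => hnij (hsymm _ _ h)) h2 h1)).symm
              have c4 : Commute (racgGen E j) (racgGen E j') :=
                (racg_comm (hE' j i j' (Ne.symm hij)
                  (fun h => hnij (hsymm _ _ h)) h5 h4)).symm
              exact (c1.mul_right c2).mul_left (c3.mul_right c4)
  -- Step 2 : conjugation by generators preserves S
  have hconjS : ∀ t : Fin d, ∀ s ∈ S, racgGen E t * s * (racgGen E t)⁻¹ ∈ S := by
    intro t s hs
    rw [ginv]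
    rcases hs with ⟨u, hu, rfl⟩ | ⟨i, j, hij, hnij, rfl⟩
    · rcases eq_or_ne t u with rfl | h
      · have e : racgGen E t * racgGen E t * racgGen E t = racgGen E t := by
          rw [gsq, one_mul]
        rw [e]; exact Or.inl ⟨t, hu, rfl⟩
      · have hc : Commute (racgGen E t) (racgGen E u) :=
          (racg_comm (hu t h)).symm
        have e : racgGen E t * racgGen E u * racgGen E t = racgGen E u := by
          rw [hc.eq, mul_assoc, gsq, mul_one]
        rw [e]; exact Or.inl ⟨u, hu, rfl⟩
    · by_cases hti : t = i
      · subst hti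
        have e : racgGen E t * (racgGen E t * racgGen E j) * racgGen E t
            = racgGen E j * racgGen E t := by
          rw [← mul_assoc, gsq, one_mul]
        rw [e]
        exact Or.inr ⟨j, t, Ne.symm hij, fun h => hnij (hsymm _ _ h), rfl⟩
      · by_cases htj : t = j
        · subst htj
          have e : racgGen E t * (racgGen E i * racgGen E t) * racgGen E t
              = racgGen E t * racgGen E i := by
            rw [← mul_assoc (racgGen E t) (racgGen E i) (racgGen E t),
              mul_assoc (racgGen E t * racgGen E i), gsq, mul_one]
          rw [e]
          exact Or.inr ⟨t, i, Ne.symm hij, fun h => hnij (hsymm _ _ h), rfl⟩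
        · have cti : Commute (racgGen E t) (racgGen E i) :=
            racg_comm (hE' i j t hij hnij hti htj)
          have ctj : Commute (racgGen E t) (racgGen E j) :=
            racg_comm (hE' j i t (Ne.symm hij) (fun h => hnij (hsymm _ _ h)) htj hti)
          have e : racgGen E t * (racgGen E i * racgGen E j) * racgGen E t
              = racgGen E i * racgGen E j := by
            rw [(cti.mul_right ctj).eq, mul_assoc, gsq, mul_one]
          rw [e]
          exact Or.inr ⟨i, j, hij, hnij, rfl⟩
  have hconj_mem : ∀ t : Fin d, ∀ h ∈ H, racgGen E t * h * (racgGen E t)⁻¹ ∈ H := by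
    intro t h hh
    refine Subgroup.closure_induction
      (p := fun z _ => racgGen E t * z * (racgGen E t)⁻¹ ∈ H) ?_ ?_ ?_ ?_ hh
    · intro s hs
      exact Subgroup.subset_closure (hconjS t s hs)
    · simpa using one_mem H
    · intro p q _ _ hp hq
      have e : racgGen E t * (p * q) * (racgGen E t)⁻¹
          = (racgGen E t * p * (racgGen E t)⁻¹) * (racgGen E t * q * (racgGen E t)⁻¹) := by
        group
      rw [e]; exact mul_mem hp hq
    · intro p _ hp
      have e : racgGen E t * p⁻¹ * (racgGen E t)⁻¹
          = (racgGen E t * p * (racgGen E t)⁻¹)⁻¹ := by group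
      rw [e]; exact inv_mem hp
  have hNormal : H.Normal := by
    rw [← Subgroup.normalizer_eq_top_iff, eq_top_iff]
    intro z _
    refine (Subgroup.closure_le (Subgroup.normalizer (H : Set (RACG E)))).2 ?_ (racg_mem_closure z)
    rintro _ ⟨t, rfl⟩
    have hmem : racgGen E t ∈ (Subgroup.normalizer (H : Set (RACG E))) := by
      rw [Subgroup.mem_normalizer_iff]
      intro h
      constructor
      · exact hconj_mem t h
      · intro hh
        have h2 := hconj_mem t _ hh
        have e : racgGen E t * (racgGen E t * h * (racgGen E t)⁻¹) * (racgGen E t)⁻¹ = h := by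
          rw [ginv]
          calc racgGen E t * (racgGen E t * h * racgGen E t) * racgGen E t
              = (racgGen E t * racgGen E t) * h * (racgGen E t * racgGen E t) := by group
            _ = h := by rw [gsq, one_mul, mul_one]
        rwa [e] at h2
    exact hmem
  -- Step 3 : coordinates of matched low vertices vanish on H
  have hχ : ∀ (m : Fin n) (w : Fin d), w ≠ Fin.castLE hnd m → ¬ E (Fin.castLE hnd m) w →
      ∀ h ∈ H, Multiplicative.toAdd (φ h) m = 0 := by
    intro m w hwne hnEw h hh
    have hmlt : (Fin.castLE hnd m : Fin d).val < n := by
      rw [Fin.coe_castLE]; exact m.2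
    have hmeta : (⟨(Fin.castLE hnd m : Fin d).val, hmlt⟩ : Fin n) = m := by
      apply Fin.ext; rw [Fin.coe_castLE]
    have hwk : n ≤ w.val := by
      by_contra hc
      push_neg at hc
      exact (C1 (Fin.castLE hnd m) w (fun h => hwne h.symm) hnEw).mp hmlt hc
    have hsingle : ∀ (u : Fin d) (hu : u.val < n), u ≠ Fin.castLE hnd m → a u m = 0 := by
      intro u hu hne
      rw [ha u hu]
      have hne2 : m ≠ (⟨u.val, hu⟩ : Fin n) := by
        intro hc
        apply hne
        apply Fin.ext
        rw [Fin.coe_castLE, hc]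
      rw [Pi.single_apply, if_neg hne2]
    have hpairval : ∀ i j : Fin d, i ≠ j → ¬ E i j → (hi : i.val < n) → n ≤ j.val →
        a i m + a j m = 0 := by
      intro i j hij hnij hi hj
      by_cases him : i = Fin.castLE hnd m
      · have haim : a i m = 1 := by
          rw [ha i hi]
          have heq : (⟨i.val, hi⟩ : Fin n) = m := by
            apply Fin.ext
            show i.val = m.val
            rw [him, Fin.coe_castLE]
          rw [heq, Pi.single_eq_same]
        have hajm : a j m = 1 := by
          have h3 := (C3 i j hi hj hnij).1
          have heq : (⟨i.val, hi⟩ : Fin n) = m := by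
            apply Fin.ext
            show i.val = m.val
            rw [him, Fin.coe_castLE]
          rwa [heq] at h3
        rw [haim, hajm]
        decide
      · have haim : a i m = 0 := hsingle i hi him
        have hjw : j ≠ w := by
          rintro rfl
          exact him (C2 j i (Fin.castLE hnd m) hij (fun h => hwne h.symm) hnij hnEw)
        have hajm : a j m = 0 := by
          have h3 := (C3 (Fin.castLE hnd m) w hmlt hwk hnEw).2 j hj hjw
          rwa [hmeta] at h3
        rw [haim, hajm, add_zero]
    refine Subgroup.closure_induction
      (p := fun z _ => Multiplicative.toAdd (φ z) m = 0) ?_ ?_ ?_ ?_ hh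
    · rintro s (⟨u, hu, rfl⟩ | ⟨i, j, hij, hnij, rfl⟩)
      · have hum : u ≠ Fin.castLE hnd m := by
          rintro rfl
          exact hnEw (hu w hwne)
        rw [hφ, toAdd_ofAdd]
        by_cases hun : u.val < n
        · exact hsingle u hun hum
        · have hun' : n ≤ u.val := le_of_not_gt hun
          have hnuw : u ≠ w := by
            rintro rfl
            exact hnEw (hsymm _ _ (hu (Fin.castLE hnd m) (Ne.symm hum)))
          have h3 := (C3 (Fin.castLE hnd m) w hmlt hwk hnEw).2 u hun' hnuw
          rwa [hmeta] at h3
      · rw [map_mul, hφ, hφ, ← ofAdd_add, toAdd_ofAdd, Pi.add_apply]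
        by_cases hi : i.val < n
        · have hj : n ≤ j.val := by
            by_contra hc
            push_neg at hc
            exact (C1 i j hij hnij).mp hi hc
          exact hpairval i j hij hnij hi hj
        · have hj : j.val < n := by
            by_contra hc
            exact hi ((C1 i j hij hnij).mpr hc)
          rw [add_comm]
          exact hpairval j i (Ne.symm hij) (fun h => hnij (hsymm _ _ h)) hj
            (le_of_not_gt hi)
    · simp
    · intro p q _ _ hp hq
      rw [map_mul, toAdd_mul, Pi.add_apply, hp, hq, add_zero]
    · intro p _ hp
      rw [map_inv, toAdd_inv, Pi.neg_apply, hp, neg_zero]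
  -- Step 4 : decomposition
  have hdecomp : ∀ z : RACG E, ∃ h ∈ H, ∃ T : Finset (Fin n),
      (∀ m ∈ T, ∃ w : Fin d, w ≠ Fin.castLE hnd m ∧ ¬ E (Fin.castLE hnd m) w) ∧
      z = h * lowProd E hnd hEn T := by
    intro z
    refine Subgroup.closure_induction
      (p := fun z _ => ∃ h ∈ H, ∃ T : Finset (Fin n),
        (∀ m ∈ T, ∃ w : Fin d, w ≠ Fin.castLE hnd m ∧ ¬ E (Fin.castLE hnd m) w) ∧
        z = h * lowProd E hnd hEn T) ?_ ?_ ?_ ?_ (racg_mem_closure z)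
    · rintro _ ⟨u, rfl⟩
      by_cases hu : ∀ v, v ≠ u → E u v
      · exact ⟨racgGen E u, Subgroup.subset_closure (Or.inl ⟨u, hu, rfl⟩), ∅,
          fun m hm => absurd hm (Finset.notMem_empty m),
          by rw [lowProd_empty, mul_one]⟩
      · push_neg at hu
        obtain ⟨w, hwu, hnuw⟩ := hu
        by_cases hun : u.val < n
        · have hcast : Fin.castLE hnd (⟨u.val, hun⟩ : Fin n) = u := by
            apply Fin.ext; rw [Fin.coe_castLE]
          refine ⟨1, one_mem H, {⟨u.val, hun⟩}, ?_, ?_⟩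
          · intro m hm
            rw [Finset.mem_singleton] at hm
            subst hm
            rw [hcast]
            exact ⟨w, hwu, hnuw⟩
          · rw [one_mul, lowProd, Finset.noncommProd_singleton, lowGen, hcast]
        · have hun' : n ≤ u.val := le_of_not_gt hun
          have hwn : w.val < n := by
            by_contra hc
            exact hun ((C1 u w (Ne.symm hwu) hnuw).mpr hc)
          have hcast : Fin.castLE hnd (⟨w.val, hwn⟩ : Fin n) = w := by
            apply Fin.ext; rw [Fin.coe_castLE]
          refine ⟨racgGen E u * racgGen E w,
            Subgroup.subset_closure (Or.inr ⟨u, w, Ne.symm hwu, hnuw, rfl⟩),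
            {⟨w.val, hwn⟩}, ?_, ?_⟩
          · intro m hm
            rw [Finset.mem_singleton] at hm
            subst hm
            rw [hcast]
            exact ⟨u, Ne.symm hwu, fun h => hnuw (hsymm _ _ h)⟩
          · rw [lowProd, Finset.noncommProd_singleton, lowGen, hcast,
              mul_assoc, gsq, mul_one]
    · exact ⟨1, one_mem H, ∅, fun m hm => absurd hm (Finset.notMem_empty m),
        by rw [lowProd_empty, mul_one]⟩
    · rintro p q _ _ ⟨h1, hh1, T1, hT1, rfl⟩ ⟨h2, hh2, T2, hT2, rfl⟩
      refine ⟨h1 * (lowProd E hnd hEn T1 * h2 * (lowProd E hnd hEn T1)⁻¹),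
        mul_mem hh1 (hNormal.conj_mem h2 hh2 _), symmDiff T1 T2, ?_, ?_⟩
      · intro m hm
        rw [Finset.mem_symmDiff] at hm
        rcases hm with ⟨hm, _⟩ | ⟨hm, _⟩
        · exact hT1 m hm
        · exact hT2 m hm
      · rw [← lowProd_mul E hnd hEn T1 T2]
        group
    · rintro p _ ⟨h, hh, T, hT, rfl⟩
      refine ⟨lowProd E hnd hEn T * h⁻¹ * (lowProd E hnd hEn T)⁻¹,
        hNormal.conj_mem _ (inv_mem hh) _, T, hT, ?_⟩
      rw [mul_inv_rev, lowProd_inv E hnd hEn T,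
        mul_assoc (lowProd E hnd hEn T * h⁻¹), lowProd_mul E hnd hEn T T,
        symmDiff_self, show (⊥ : Finset (Fin n)) = ∅ from rfl, lowProd_empty, mul_one]
  -- Step 5 : the kernel is contained in H
  have hker : ∀ z : RACG E, z ∈ φ.ker → z ∈ H := by
    intro z hz
    obtain ⟨h, hh, T, hT, rfl⟩ := hdecomp z
    have hTempty : T = ∅ := by
      by_contra hne
      obtain ⟨m, hm⟩ := Finset.nonempty_of_ne_empty hne
      obtain ⟨w, hw1, hw2⟩ := hT m hm
      have h0 : Multiplicative.toAdd (φ (h * lowProd E hnd hEn T)) m = 0 := by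
        rw [MonoidHom.mem_ker] at hz
        rw [hz]
        simp
      rw [map_mul, toAdd_mul, Pi.add_apply, hχ m w hw1 hw2 h hh,
        toAdd_phi_lowProd E hnd hEn a ha φ hφ T m, zero_add, if_pos hm] at h0
      exact one_ne_zero h0
    rw [hTempty, lowProd_empty, mul_one]
    exact hh
  exact (closure_comm hScomm x (hker x hx) y (hker y hy)).eq

end Suff


section Nec

abbrev A3 : Equiv.Perm (Fin 3) := Equiv.swap 0 1
abbrev B3 : Equiv.Perm (Fin 3) := Equiv.swap 1 2
abbrev A4 : Equiv.Perm (Fin 4) := Equiv.swap 0 1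
abbrev B4 : Equiv.Perm (Fin 4) := Equiv.swap 1 2
abbrev C4 : Equiv.Perm (Fin 4) := Equiv.swap 2 3
abbrev G5 : Type := Equiv.Perm (Fin 3) × Multiplicative (ZMod 2)
abbrev A5 : G5 := (A3, 1)
abbrev B5 : G5 := (B3, 1)
abbrev C5 : G5 := (1, Multiplicative.ofAdd 1)

variable {d n : ℕ} {E : Fin d → Fin d → Prop}

lemma pi_add_self (v : Fin n → ZMod 2) : v + v = 0 := by
  funext t
  exact CharTwo.add_self_eq_zero (v t)

lemma racg_sq_mem_ker
    (a : Fin d → Fin n → ZMod 2)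
    (φ : RACG E →* Multiplicative (Fin n → ZMod 2))
    (hφ : ∀ j : Fin d, φ (racgGen E j) = Multiplicative.ofAdd (a j))
    (p q : Fin d) : (racgGen E p * racgGen E q) ^ 2 ∈ φ.ker := by
  rw [MonoidHom.mem_ker, map_pow, map_mul, hφ, hφ, ← ofAdd_add, pow_two,
    ← ofAdd_add, pi_add_self, ofAdd_zero]

lemma psi_lowProd_eq_one (hnd : n ≤ d)
    (hEn : ∀ i j : Fin d, i.val < n → j.val < n → i ≠ j → E i j)
    {G : Type*} [Group G] (ψ : RACG E →* G) (T : Finset (Fin n))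
    (h : ∀ m ∈ T, ψ (lowGen E hnd m) = 1) :
    ψ (lowProd E hnd hEn T) = 1 := by
  rw [lowProd, Finset.map_noncommProd]
  exact (Finset.noncommProd_eq_pow_card _ _ _ 1 h).trans (one_pow _)


lemma racg_nec_C2
    (hsymm : ∀ i j, E i j → E j i) (hirr : ∀ i, ¬ E i i)
    (a : Fin d → Fin n → ZMod 2)
    (φ : RACG E →* Multiplicative (Fin n → ZMod 2))
    (hφ : ∀ j : Fin d, φ (racgGen E j) = Multiplicative.ofAdd (a j))
    (habel : ∀ x y : RACG E, x ∈ φ.ker → y ∈ φ.ker → x * y = y * x) :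
    ∀ j i k : Fin d, i ≠ j → k ≠ j → ¬ E i j → ¬ E k j → i = k := by
  intro j i k hij hkj hnij hnkj
  by_contra hik
  classical
  set f : Fin d → Equiv.Perm (Fin 4) :=
    fun t => if t = i then A4 else if t = j then B4 else if t = k then C4 else 1 with hf
  have hrel1 : ∀ t, f t ^ 2 = 1 := by
    intro t
    simp only [hf]
    split_ifs <;> decide
  have hrel2 : ∀ u v, E u v → (f u * f v) ^ 2 = 1 := by
    intro u v huv
    simp only [hf]
    split_ifs <;>
      first
        | decide
        | (exfalso; subst_vars;
           first
             | exact hnij huv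
             | exact hnij (hsymm _ _ huv)
             | exact hnkj huv
             | exact hnkj (hsymm _ _ huv)
             | exact hirr _ huv)
  set ψ : RACG E →* Equiv.Perm (Fin 4) :=
    PresentedGroup.toGroup (racg_lift_rels f hrel1 hrel2) with hψdef
  have hψ : ∀ t, ψ (racgGen E t) = f t := fun t => PresentedGroup.toGroup.of _
  have hψi : ψ (racgGen E i) = A4 := by rw [hψ]; simp [hf]
  have hψj : ψ (racgGen E j) = B4 := by
    rw [hψ]; simp [hf, Ne.symm hij]
  have hψk : ψ (racgGen E k) = C4 := by
    rw [hψ]; simp [hf, hkj, show k ≠ i from fun h => hik h.symm]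
  have hcomm := habel ((racgGen E i * racgGen E j) ^ 2) ((racgGen E k * racgGen E j) ^ 2)
    (racg_sq_mem_ker a φ hφ i j) (racg_sq_mem_ker a φ hφ k j)
  have := congrArg ψ hcomm
  rw [map_mul, map_mul, map_pow, map_pow, map_mul, map_mul, hψi, hψj, hψk] at this
  exact absurd this (by decide)


lemma racg_nec_high (hnd : n ≤ d)
    (hsymm : ∀ i j, E i j → E j i) (hirr : ∀ i, ¬ E i i)
    (hEn : ∀ i j : Fin d, i.val < n → j.val < n → i ≠ j → E i j)
    (a : Fin d → Fin n → ZMod 2)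
    (ha : ∀ (i : Fin d) (h : i.val < n), a i = Pi.single (⟨i.val, h⟩ : Fin n) 1)
    (φ : RACG E →* Multiplicative (Fin n → ZMod 2))
    (hφ : ∀ j : Fin d, φ (racgGen E j) = Multiplicative.ofAdd (a j))
    (habel : ∀ x y : RACG E, x ∈ φ.ker → y ∈ φ.ker → x * y = y * x)
    (i j : Fin d) (hij : i ≠ j) (hnij : ¬ E i j)
    (hi : n ≤ i.val) (hj : n ≤ j.val) : False := by
  classical
  set y : RACG E := racgGen E i * lowProd E hnd hEn (corrSet (a i)) with hy
  have hyker : y ∈ φ.ker := by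
    rw [MonoidHom.mem_ker, hy, map_mul, hφ, phi_corr E hnd hEn a ha φ hφ,
      ← ofAdd_add, pi_add_self, ofAdd_zero]
  set f : Fin d → Equiv.Perm (Fin 3) :=
    fun t => if t = i then A3 else if t = j then B3 else 1 with hf
  have hrel1 : ∀ t, f t ^ 2 = 1 := by
    intro t
    simp only [hf]
    split_ifs <;> decide
  have hrel2 : ∀ u v, E u v → (f u * f v) ^ 2 = 1 := by
    intro u v huv
    simp only [hf]
    split_ifs <;>
      first
        | decide
        | (exfalso; subst_vars;
           first
             | exact hnij huv
             | exact hnij (hsymm _ _ huv)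
             | exact hirr _ huv)
  set ψ : RACG E →* Equiv.Perm (Fin 3) :=
    PresentedGroup.toGroup (racg_lift_rels f hrel1 hrel2) with hψdef
  have hψ : ∀ t, ψ (racgGen E t) = f t := fun t => PresentedGroup.toGroup.of _
  have hψi : ψ (racgGen E i) = A3 := by rw [hψ]; simp [hf]
  have hψj : ψ (racgGen E j) = B3 := by rw [hψ]; simp [hf, Ne.symm hij]
  have hψlow : ψ (lowProd E hnd hEn (corrSet (a i))) = 1 := by
    refine psi_lowProd_eq_one hnd hEn ψ _ ?_
    intro m _
    rw [lowGen, hψ]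
    have h1 : Fin.castLE hnd m ≠ i := by
      intro hc
      have := Fin.coe_castLE hnd m
      rw [hc] at this
      omega
    have h2 : Fin.castLE hnd m ≠ j := by
      intro hc
      have := Fin.coe_castLE hnd m
      rw [hc] at this
      omega
    simp [hf, h1, h2]
  have hcomm := habel ((racgGen E i * racgGen E j) ^ 2) y
    (racg_sq_mem_ker a φ hφ i j) hyker
  have hc2 := congrArg ψ hcomm
  simp only [hy, map_mul, map_pow, hψi, hψj, hψlow, mul_one] at hc2
  exact absurd hc2 (by decide)

lemma racg_nec_C3a (hnd : n ≤ d)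
    (hsymm : ∀ i j, E i j → E j i) (hirr : ∀ i, ¬ E i i)
    (hEn : ∀ i j : Fin d, i.val < n → j.val < n → i ≠ j → E i j)
    (a : Fin d → Fin n → ZMod 2)
    (ha : ∀ (i : Fin d) (h : i.val < n), a i = Pi.single (⟨i.val, h⟩ : Fin n) 1)
    (φ : RACG E →* Multiplicative (Fin n → ZMod 2))
    (hφ : ∀ j : Fin d, φ (racgGen E j) = Multiplicative.ofAdd (a j))
    (habel : ∀ x y : RACG E, x ∈ φ.ker → y ∈ φ.ker → x * y = y * x)
    (i j : Fin d) (hi : i.val < n) (hj : n ≤ j.val) (hnij : ¬ E i j) :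
    a j ⟨i.val, hi⟩ = 1 := by
  classical
  rcases zmod2_cases (a j ⟨i.val, hi⟩) with h0 | h1
  swap
  · exact h1
  exfalso
  have hij : i ≠ j := by intro hc; rw [hc] at hi; omega
  set y : RACG E := racgGen E j * lowProd E hnd hEn (corrSet (a j)) with hy
  have hyker : y ∈ φ.ker := by
    rw [MonoidHom.mem_ker, hy, map_mul, hφ, phi_corr E hnd hEn a ha φ hφ,
      ← ofAdd_add, pi_add_self, ofAdd_zero]
  set f : Fin d → Equiv.Perm (Fin 3) :=
    fun t => if t = i then A3 else if t = j then B3 else 1 with hf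
  have hrel1 : ∀ t, f t ^ 2 = 1 := by
    intro t
    simp only [hf]
    split_ifs <;> decide
  have hrel2 : ∀ u v, E u v → (f u * f v) ^ 2 = 1 := by
    intro u v huv
    simp only [hf]
    split_ifs <;>
      first
        | decide
        | (exfalso; subst_vars;
           first
             | exact hnij huv
             | exact hnij (hsymm _ _ huv)
             | exact hirr _ huv)
  set ψ : RACG E →* Equiv.Perm (Fin 3) :=
    PresentedGroup.toGroup (racg_lift_rels f hrel1 hrel2) with hψdef
  have hψ : ∀ t, ψ (racgGen E t) = f t := fun t => PresentedGroup.toGroup.of _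
  have hψi : ψ (racgGen E i) = A3 := by rw [hψ]; simp [hf]
  have hψj : ψ (racgGen E j) = B3 := by rw [hψ]; simp [hf, Ne.symm hij]
  have hψlow : ψ (lowProd E hnd hEn (corrSet (a j))) = 1 := by
    refine psi_lowProd_eq_one hnd hEn ψ _ ?_
    intro m hm
    rw [lowGen, hψ]
    have hmem : a j m = 1 := by
      rw [corrSet, Finset.mem_filter] at hm
      exact hm.2
    have h1 : Fin.castLE hnd m ≠ i := by
      intro hc
      have hmi : m = (⟨i.val, hi⟩ : Fin n) := by
        apply Fin.ext
        show m.val = i.val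
        rw [← hc, Fin.coe_castLE]
      rw [hmi, h0] at hmem
      exact one_ne_zero hmem.symm
    have h2 : Fin.castLE hnd m ≠ j := by
      intro hc
      have := Fin.coe_castLE hnd m
      rw [hc] at this
      omega
    simp [hf, h1, h2]
  have hcomm := habel ((racgGen E i * racgGen E j) ^ 2) y
    (racg_sq_mem_ker a φ hφ i j) hyker
  have hc2 := congrArg ψ hcomm
  simp only [hy, map_mul, map_pow, hψi, hψj, hψlow, mul_one] at hc2
  exact absurd hc2 (by decide)

lemma racg_nec_C3b (hnd : n ≤ d)
    (hsymm : ∀ i j, E i j → E j i) (hirr : ∀ i, ¬ E i i)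
    (hEn : ∀ i j : Fin d, i.val < n → j.val < n → i ≠ j → E i j)
    (a : Fin d → Fin n → ZMod 2)
    (ha : ∀ (i : Fin d) (h : i.val < n), a i = Pi.single (⟨i.val, h⟩ : Fin n) 1)
    (φ : RACG E →* Multiplicative (Fin n → ZMod 2))
    (hφ : ∀ j : Fin d, φ (racgGen E j) = Multiplicative.ofAdd (a j))
    (habel : ∀ x y : RACG E, x ∈ φ.ker → y ∈ φ.ker → x * y = y * x)
    (i j : Fin d) (hi : i.val < n) (hj : n ≤ j.val) (hnij : ¬ E i j)
    (k : Fin d) (hk : n ≤ k.val) (hkj : k ≠ j) :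
    a k ⟨i.val, hi⟩ = 0 := by
  classical
  rcases zmod2_cases (a k ⟨i.val, hi⟩) with h0 | hak1
  · exact h0
  exfalso
  have hij : i ≠ j := by intro hc; rw [hc] at hi; omega
  have hik : i ≠ k := by intro hc; rw [hc] at hi; omega
  set v : Fin n → ZMod 2 := Pi.single (⟨i.val, hi⟩ : Fin n) 1 + a k with hv
  set y : RACG E := racgGen E i * (racgGen E k * lowProd E hnd hEn (corrSet v)) with hy
  have hyker : y ∈ φ.ker := by
    rw [MonoidHom.mem_ker, hy, map_mul, map_mul, hφ, hφ,
      phi_corr E hnd hEn a ha φ hφ, ← ofAdd_add, ← ofAdd_add, ha i hi]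
    have hz : Pi.single (⟨i.val, hi⟩ : Fin n) 1 + (a k + v) = 0 := by
      rw [hv]
      funext t
      simp only [Pi.add_apply, Pi.zero_apply]
      have h2 : ∀ p q : ZMod 2, p + (q + (p + q)) = 0 := by decide
      exact h2 _ _
    rw [hz, ofAdd_zero]
  set f : Fin d → G5 :=
    fun t => if t = i then A5 else if t = j then B5 else if t = k then C5 else 1 with hf
  have hrel1 : ∀ t, f t ^ 2 = 1 := by
    intro t
    simp only [hf]
    split_ifs <;> decide
  have hrel2 : ∀ u w, E u w → (f u * f w) ^ 2 = 1 := by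
    intro u w huw
    simp only [hf]
    split_ifs <;>
      first
        | decide
        | (exfalso; subst_vars;
           first
             | exact hnij huw
             | exact hnij (hsymm _ _ huw)
             | exact hirr _ huw)
  set ψ : RACG E →* G5 :=
    PresentedGroup.toGroup (racg_lift_rels f hrel1 hrel2) with hψdef
  have hψ : ∀ t, ψ (racgGen E t) = f t := fun t => PresentedGroup.toGroup.of _
  have hψi : ψ (racgGen E i) = A5 := by rw [hψ]; simp [hf]
  have hψj : ψ (racgGen E j) = B5 := by rw [hψ]; simp [hf, Ne.symm hij]
  have hψk : ψ (racgGen E k) = C5 := by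
    rw [hψ]; simp [hf, hkj, Ne.symm hik]
  have hψlow : ψ (lowProd E hnd hEn (corrSet v)) = 1 := by
    refine psi_lowProd_eq_one hnd hEn ψ _ ?_
    intro m hm
    rw [lowGen, hψ]
    have hmem : v m = 1 := by
      rw [corrSet, Finset.mem_filter] at hm
      exact hm.2
    have h1 : Fin.castLE hnd m ≠ i := by
      intro hc
      have hmi : m = (⟨i.val, hi⟩ : Fin n) := by
        apply Fin.ext
        show m.val = i.val
        rw [← hc, Fin.coe_castLE]
      rw [hmi, hv] at hmem
      rw [Pi.add_apply, Pi.single_eq_same, hak1] at hmem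
      exact absurd hmem (by decide)
    have h2 : Fin.castLE hnd m ≠ j := by
      intro hc
      have := Fin.coe_castLE hnd m
      rw [hc] at this
      omega
    have h3 : Fin.castLE hnd m ≠ k := by
      intro hc
      have := Fin.coe_castLE hnd m
      rw [hc] at this
      omega
    simp [hf, h1, h2, h3]
  have hcomm := habel ((racgGen E i * racgGen E j) ^ 2) y
    (racg_sq_mem_ker a φ hφ i j) hyker
  have hc2 := congrArg ψ hcomm
  simp only [hy, map_mul, map_pow, hψi, hψj, hψk, hψlow, mul_one] at hc2
  exact absurd hc2 (by decide)

end Nec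


/-- Theorem 1.1/5.1: assuming `E i j` holds for all distinct `i, j ∈ {1,…,n}`,
the kernel of `φ` is abelian if and only if either (i) the graph `E` is complete, or
(ii) every non-adjacent pair contains exactly one element of `{1,…,n}`, every vertex
has at most one non-neighbour, and for every non-adjacent pair `{i, j}` with
`i ≤ n < j` one has `a j i = 1` and `a k i = 0` for all `k` with `n < k ≤ d`,
`k ≠ j`. -/
theorem stmt_0 {d : ℕ} (hd : 1 ≤ d) (E : Fin d → Fin d → Prop)
    (hsymm : ∀ i j, E i j → E j i) (hirr : ∀ i, ¬ E i i)
    (n : ℕ) (hn : 1 ≤ n) (hnd : n ≤ d)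
    (a : Fin d → Fin n → ZMod 2)
    (ha : ∀ (i : Fin d) (h : i.val < n), a i = Pi.single (⟨i.val, h⟩ : Fin n) 1)
    (φ : RACG E →* Multiplicative (Fin n → ZMod 2))
    (hφ : ∀ j : Fin d, φ (racgGen E j) = Multiplicative.ofAdd (a j))
    (hEn : ∀ i j : Fin d, i.val < n → j.val < n → i ≠ j → E i j) :
    (∀ x y : RACG E, x ∈ φ.ker → y ∈ φ.ker → x * y = y * x) ↔
      ((∀ i j : Fin d, i ≠ j → E i j) ∨
        ((∀ i j : Fin d, i ≠ j → ¬ E i j → (i.val < n ↔ ¬ j.val < n)) ∧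
          (∀ j i k : Fin d, i ≠ j → k ≠ j → ¬ E i j → ¬ E k j → i = k) ∧
          (∀ (i j : Fin d) (hi : i.val < n), n ≤ j.val → ¬ E i j →
            a j ⟨i.val, hi⟩ = 1 ∧
              ∀ k : Fin d, n ≤ k.val → k ≠ j → a k ⟨i.val, hi⟩ = 0))) := by
  constructor
  · intro habel
    right
    refine ⟨?_, racg_nec_C2 hsymm hirr a φ hφ habel, ?_⟩
    · intro i j hij hnij
      constructor
      · intro hi hjlt
        exact absurd (hEn i j hi hjlt hij) hnij
      · intro hj
        by_contra hi
        exact racg_nec_high hnd hsymm hirr hEn a ha φ hφ habel i j hij hnij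
          (le_of_not_gt hi) (le_of_not_gt hj)
    · intro i j hi hj hnij
      exact ⟨racg_nec_C3a hnd hsymm hirr hEn a ha φ hφ habel i j hi hj hnij,
        fun k hk hkj =>
          racg_nec_C3b hnd hsymm hirr hEn a ha φ hφ habel i j hi hj hnij k hk hkj⟩
  · rintro (hcomp | ⟨C1, C2, C3⟩)
    · intro x y _ _
      have base : ∀ p ∈ Set.range (racgGen E), ∀ q ∈ Set.range (racgGen E),
          Commute p q := by
        rintro _ ⟨u, rfl⟩ _ ⟨v, rfl⟩
        rcases eq_or_ne u v with rfl | h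
        · exact Commute.refl _
        · exact racg_comm (hcomp u v h)
      exact (closure_comm base x (racg_mem_closure x) y (racg_mem_closure y)).eq
    · exact racg_ker_abelian hnd hsymm hEn a ha φ hφ C1 C2 C3
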